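/- The overpartition function satisfies the congruence p̄(5n+2) ≡ 0 (mod 4) for all n ≥ 0. -/

import Mathlib

open PowerSeries

/-- The infinite product `(q^a; q^b)_∞ = ∏_{n≥0} (1 - q^{a+bn})` as a formal power series:
its `d`-th coefficient is that of any sufficiently long finite truncation of the product. -/
noncomputable def qpoch (a b : ℕ) : PowerSeries ℚ :=
  PowerSeries.mk fun d =>
    PowerSeries.coeff d
      (∏ n ∈ Finset.range (d + 1), (1 - (X : PowerSeries ℚ) ^ (a + b * n)))

/-- `(q^a; q^b)_∞` viewed as a formal Laurent series. -/
noncomputable def E (a b : ℕ) : LaurentSeries ℚ := (qpoch a b : LaurentSeries ℚ)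

/-- `q` as a formal Laurent series. -/
noncomputable def Lq : LaurentSeries ℚ := ((X : PowerSeries ℚ) : LaurentSeries ℚ)

open Finset

noncomputable section

abbrev PS := PowerSeries ℚ
abbrev K := LaurentSeries ℚ

/-- partial product of (q^2;q^2) -/
def PP (m : ℕ) : PS := ∏ j ∈ range m, (1 - (X : PS) ^ (2*j+2))
/-- partial product of (q;q^2) -/
def RR (m : ℕ) : PS := ∏ j ∈ range m, (1 - (X : PS) ^ (2*j+1))
/-- partial product of (q;q) -/
def Pfull (m : ℕ) : PS := ∏ j ∈ range m, (1 - (X : PS) ^ (j+1))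

lemma constCoeff_oneSubProd (s : Finset ℕ) (e : ℕ → ℕ) (he : ∀ i ∈ s, e i ≠ 0) :
    constantCoeff (∏ n ∈ s, (1 - (X : PS) ^ (e n))) = 1 := by
  rw [map_prod]
  apply Finset.prod_eq_one
  intro i hi
  rw [map_sub, map_one, map_pow, constantCoeff_X, zero_pow (he i hi), sub_zero]

lemma constCoeff_PP (m : ℕ) : constantCoeff (PP m) = 1 :=
  constCoeff_oneSubProd _ _ (fun i _ => by omega)

lemma PP_ne (m : ℕ) : PP m ≠ 0 := fun h => by
  have := constCoeff_PP m; rw [h] at this; simp at this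

lemma PP_succ (m : ℕ) : PP (m+1) = PP m * (1 - (X : PS)^(2*m+2)) := prod_range_succ _ _

-- multiplying by 1 - X^k (k>i) does not change coefficient i
lemma coeff_mul_oneSub (f : PS) (i k : ℕ) (h : i < k) :
    coeff i (f * (1 - (X:PS)^k)) = coeff i f := by
  rw [mul_sub, mul_one, map_sub, coeff_mul_X_pow', if_neg (by omega)]
  simp

lemma coeff_prod_stable (e : ℕ → ℕ) (i M : ℕ) (he : ∀ n, M ≤ n → i < e n) :
    ∀ M', M ≤ M' → coeff i (∏ n ∈ range M', (1 - (X:PS)^(e n)))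
      = coeff i (∏ n ∈ range M, (1 - (X:PS)^(e n))) := by
  intro M' h
  induction M' with
  | zero => cases Nat.le_zero.mp h; rfl
  | succ M' ih =>
    rcases Nat.lt_or_ge M (M'+1) with h' | h'
    · rw [prod_range_succ, coeff_mul_oneSub _ _ _ (he M' (by omega)), ih (by omega)]
    · have : M = M' + 1 := le_antisymm h h'
      rw [this]

/-- X^(d+1) ∣ f - g iff low coefficients agree -/
lemma dvd_iff_coeff_eq (d : ℕ) (f g : PS) :
    (X:PS)^(d+1) ∣ f - g ↔ ∀ i < d + 1, coeff i f = coeff i g := by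
  rw [X_pow_dvd_iff]
  constructor
  · intro h i hi; have := h i hi; rw [map_sub, sub_eq_zero] at this; exact this
  · intro h i hi; rw [map_sub, sub_eq_zero]; exact h i hi

lemma dvd_unit_cancel (k : ℕ) (f u : PS) (hu : constantCoeff u ≠ 0)
    (h : (X:PS)^k ∣ f * u) : (X:PS)^k ∣ f := by
  have h2 : f = (f * u) * u⁻¹ := by
    rw [mul_assoc, PowerSeries.mul_inv_cancel u hu, mul_one]
  rw [h2]
  exact h.mul_right _

lemma PP_congr (d L a : ℕ) (hL : L ≤ a) (hd : d < 2*L+2) :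
    (X:PS)^(d+1) ∣ PP a - PP L := by
  induction a with
  | zero => cases Nat.le_zero.mp hL; simp
  | succ a ih =>
    rcases Nat.lt_or_ge L (a+1) with h' | h'
    · have iha := ih (by omega)
      rw [PP_succ]
      have : PP a * (1 - (X:PS)^(2*a+2)) - PP L
          = (PP a - PP L) * (1 - (X:PS)^(2*a+2)) - PP L * (X:PS)^(2*a+2) := by ring
      rw [this]
      apply dvd_sub (iha.mul_right _)
      apply Dvd.dvd.mul_left
      exact pow_dvd_pow _ (by omega)
    · have : L = a + 1 := le_antisymm hL h'
      rw [this, sub_self]; exact dvd_zero _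

/-- the parity split -/
lemma Pfull_split (N : ℕ) : Pfull (2*N) = RR N * PP N := by
  induction N with
  | zero => simp [Pfull, RR, PP]
  | succ N ih =>
    have h2 : 2*(N+1) = (2*N) + 1 + 1 := by ring
    rw [RR, PP, prod_range_succ, prod_range_succ, ← RR, ← PP, h2, Pfull, prod_range_succ,
      prod_range_succ, ← Pfull, ih]
    ring_nf

lemma coe_injective : Function.Injective (fun f : PS => (f : K)) :=
  HahnSeries.ofPowerSeries_injective

lemma Lq_ne : Lq ≠ 0 := by
  intro h
  have : (X : PS) = 0 := coe_injective (by simpa [Lq] using h)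
  exact X_ne_zero this

lemma coe_ne (f : PS) (h : f ≠ 0) : (f : K) ≠ 0 := by
  intro h'; exact h (coe_injective (by simpa using h'))

lemma coe_X_pow (k : ℕ) : (((X:PS)^k : PS) : K) = Lq ^ k := by
  rw [PowerSeries.coe_pow]; rfl

lemma coe_oneSubXpow (k : ℕ) : (((1 - (X:PS)^k : PS)) : K) = 1 - Lq ^ k := by
  rw [PowerSeries.coe_sub, PowerSeries.coe_one, coe_X_pow]

def ppL (m : ℕ) : K := ((PP m : PS) : K)
def RRL (m : ℕ) : K := ((RR m : PS) : K)

lemma ppL_ne (m : ℕ) : ppL m ≠ 0 := coe_ne _ (PP_ne m)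

lemma ppL_succ (m : ℕ) : ppL (m+1) = ppL m * (1 - Lq^(2*m+2)) := by
  rw [ppL, PP_succ, PowerSeries.coe_mul, coe_oneSubXpow]; rfl

lemma oneSubLq_ne (k : ℕ) (hk : k ≠ 0) : (1 : K) - Lq^k ≠ 0 := by
  rw [← coe_oneSubXpow]
  apply coe_ne
  intro h
  have := congrArg (constantCoeff) h
  rw [map_sub, map_one, map_pow, constantCoeff_X, zero_pow hk, sub_zero] at this
  simp at this

/-- Gaussian binomial in the Laurent series field, base q². `Qb a b = [a+b choose a]_{q²}`. -/
def Qb (a b : ℕ) : K := ppL (a+b) / (ppL a * ppL b)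

lemma Qb_zero_left (b : ℕ) : Qb 0 b = 1 := by
  rw [Qb, ppL]
  show ((PP (0+b) : PS) : K) / (((PP 0 : PS) : K) * _) = 1
  rw [Nat.zero_add, show PP 0 = 1 from rfl, PowerSeries.coe_one, one_mul]
  exact div_self (ppL_ne b)

lemma Qb_zero_right (a : ℕ) : Qb a 0 = 1 := by
  rw [Qb, Nat.add_zero, show ppL 0 = 1 from by rw [ppL, show PP 0 = 1 from rfl, PowerSeries.coe_one], mul_one]
  exact div_self (ppL_ne a)

lemma Qb_pascal (a b : ℕ) :
    Qb (a+1) (b+1) = Qb (a+1) b + Lq^(2*b+2) * Qb a (b+1) := by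
  have key : ppL (a+b+2) = ppL (a+b+1) * (1 - Lq^(2*b+2))
      + Lq^(2*b+2) * (ppL (a+b+1) * (1 - Lq^(2*a+2))) := by
    have h1 : ppL (a+b+2) = ppL (a+b+1) * (1 - Lq^(2*(a+b+1)+2)) := ppL_succ (a+b+1)
    rw [h1]
    have : (2*(a+b+1)+2) = (2*a+2) + (2*b+2) := by ring
    rw [this, pow_add]
    ring
  rw [Qb, Qb, Qb]
  rw [show a+1+(b+1) = a+b+2 from by ring, show a+1+b = a+b+1 from by ring,
    show a+(b+1) = a+b+1 from by ring]
  rw [mul_div_assoc']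
  rw [div_add_div _ _ (mul_ne_zero (ppL_ne (a+1)) (ppL_ne b)) (mul_ne_zero (ppL_ne a) (ppL_ne (b+1))),
    div_eq_div_iff (mul_ne_zero (ppL_ne (a+1)) (ppL_ne (b+1)))
      (mul_ne_zero (mul_ne_zero (ppL_ne (a+1)) (ppL_ne b)) (mul_ne_zero (ppL_ne a) (ppL_ne (b+1))))]
  rw [key, ppL_succ a, ppL_succ b]
  ring

set_option maxHeartbeats 1000000 in
lemma qBT (z : K) : ∀ n : ℕ, ∏ j ∈ range n, (1 + z * Lq^(2*j))
    = ∑ m ∈ range (n+1), z^m * Lq^(m*(m-1)) * Qb m (n-m) := by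
  intro n
  induction n with
  | zero => simp [Qb_zero_left]
  | succ n ih =>
    rw [prod_range_succ, ih]
    set S1 := ∑ m ∈ range n, z^(m+1) * Lq^((m+1)*m) * Qb (m+1) (n-(m+1)) with hS1
    set S2 := ∑ m ∈ range n, z^(m+1) * Lq^(m*(m-1)+2*n) * Qb m (n-m) with hS2
    set T := z^(n+1) * Lq^((n+1)*n) with hT
    set A := ∑ m ∈ range (n+1), z^m * Lq^(m*(m-1)) * Qb m (n-m) with hA
    have c1 : A = S1 + 1 := by
      rw [hA, Finset.sum_range_succ' (fun m => z^m * Lq^(m*(m-1)) * Qb m (n-m)) n]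
      have h0' : z^0 * Lq^(0*(0-1)) * Qb 0 (n-0) = 1 := by simp [Qb_zero_left]
      rw [h0', hS1]
      simp only [Nat.add_sub_cancel]
    have c2 : A * (z * Lq^(2*n)) = S2 + T := by
      rw [hA, Finset.sum_mul,
        Finset.sum_range_succ (fun m => z^m * Lq^(m*(m-1)) * Qb m (n-m) * (z * Lq^(2*n)))]
      have e1 : ∑ m ∈ range n, z^m * Lq^(m*(m-1)) * Qb m (n-m) * (z * Lq^(2*n)) = S2 := by
        rw [hS2]
        apply Finset.sum_congr rfl
        intro m _
        rw [pow_succ, pow_add]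
        ring
      have e2 : z^n * Lq^(n*(n-1)) * Qb n (n-n) * (z * Lq^(2*n)) = T := by
        rw [Nat.sub_self, Qb_zero_right, mul_one, hT]
        cases n with
        | zero => simp
        | succ k =>
          rw [show (k+1+1)*(k+1) = (k+1)*k + 2*(k+1) from by ring,
            show (k+1) - 1 = k from rfl, pow_add]
          ring
      rw [e1, e2]
    have c3 : ∑ m ∈ range (n+1+1), z^m * Lq^(m*(m-1)) * Qb m (n+1-m) = S1 + S2 + T + 1 := by
      rw [Finset.sum_range_succ' (fun m => z^m * Lq^(m*(m-1)) * Qb m (n+1-m)) (n+1)]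
      have h0 : z^0 * Lq^(0*(0-1)) * Qb 0 (n+1-0) = 1 := by simp [Qb_zero_left]
      rw [h0,
        Finset.sum_range_succ (fun m => z^(m+1) * Lq^((m+1)*((m+1)-1)) * Qb (m+1) (n+1-(m+1)))]
      have htop : z^(n+1) * Lq^((n+1)*((n+1)-1)) * Qb (n+1) (n+1-(n+1)) = T := by
        rw [Nat.sub_self, Qb_zero_right, mul_one, hT, Nat.add_sub_cancel]
      rw [htop]
      have hmid : ∑ m ∈ range n, z^(m+1) * Lq^((m+1)*((m+1)-1)) * Qb (m+1) (n+1-(m+1))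
          = S1 + S2 := by
        rw [hS1, hS2, ← Finset.sum_add_distrib]
        apply Finset.sum_congr rfl
        intro m hm
        have hmn : m < n := Finset.mem_range.mp hm
        have e1 : n + 1 - (m+1) = (n - (m+1)) + 1 := by omega
        rw [e1, Qb_pascal, mul_add]
        have e4 : n - (m+1) + 1 = n - m := by omega
        rw [e4]
        have eexp : (m+1)*m + (2*(n-(m+1))+2) = m*(m-1)+2*n := by
          obtain ⟨t, ht⟩ : ∃ t, n = m + 1 + t := ⟨n - m - 1, by omega⟩
          subst ht
          rw [show m + 1 + t - (m+1) = t from by omega]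
          cases m with
          | zero => omega
          | succ k =>
            rw [show (k+1) - 1 = k from rfl]
            ring
        have hA2 : z^(m+1) * Lq^((m+1)*((m+1)-1)) * (Lq^(2*(n-(m+1))+2) * Qb m (n-m))
            = z^(m+1) * Lq^(m*(m-1)+2*n) * Qb m (n-m) := by
          rw [show z^(m+1) * Lq^((m+1)*((m+1)-1)) * (Lq^(2*(n-(m+1))+2) * Qb m (n-m))
              = z^(m+1) * (Lq^((m+1)*m) * Lq^(2*(n-(m+1))+2)) * Qb m (n-m) from by
            rw [show (m+1)*((m+1)-1) = (m+1)*m from rfl]; ring]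
          rw [← pow_add, eexp]
        rw [hA2]
        simp only [Nat.add_sub_cancel]
      rw [hmid]
    rw [mul_add, mul_one, c2, c1, c3]
    ring

def sqe (N m : ℕ) : ℕ := (((m:ℤ) - N)^2).toNat

lemma sqe_cast (N m : ℕ) : ((sqe N m : ℤ)) = ((m:ℤ) - N)^2 :=
  Int.toNat_of_nonneg (sq_nonneg _)

lemma zpow_neg_aux (e : ℤ) : ∀ m : ℕ, (-Lq^(e:ℤ))^m = (-1:K)^m * Lq^(e * m) := by
  intro m
  induction m with
  | zero => simp
  | succ m ih =>
    rw [pow_succ, ih, pow_succ]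
    rw [show (((m+1 : ℕ)):ℤ) = (m:ℤ)+1 from by push_cast; ring]
    rw [show e * ((m:ℤ)+1) = e*(m:ℤ) + e from by ring, zpow_add₀ Lq_ne]
    ring

lemma sum_odds : ∀ N : ℕ, ∑ j ∈ range N, (2*(j:ℤ)+1) = (N:ℤ)^2 := by
  intro N
  induction N with
  | zero => simp
  | succ N ih => rw [Finset.sum_range_succ, ih]; push_cast; ring

lemma RRL_eq (N : ℕ) : RRL N = ∏ j ∈ range N, (1 - Lq^(2*j+1)) := by
  rw [RRL, RR]
  rw [show ((∏ j ∈ range N, (1 - (X:PS)^(2*j+1)) : PS) : K)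
      = (HahnSeries.ofPowerSeries ℤ ℚ) (∏ j ∈ range N, (1 - (X:PS)^(2*j+1))) from rfl, map_prod]
  apply Finset.prod_congr rfl
  intro j _
  exact coe_oneSubXpow (2*j+1)

lemma jtpL (N : ℕ) : RRL N ^ 2
    = ∑ m ∈ range (2*N+1), (-1:K)^(m+N) * Lq^(sqe N m) * Qb m (2*N-m) := by
  have h := qBT (-Lq^((1:ℤ) - 2*N)) (2*N)
  -- LHS analysis
  have hfac : ∀ j : ℕ, 1 + (-Lq^((1:ℤ) - 2*N)) * Lq^(2*j)
      = 1 - Lq^((2*(j:ℤ)+1-2*N : ℤ)) := by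
    intro j
    rw [← zpow_natCast Lq (2*j)]
    rw [show ((2*j : ℕ) : ℤ) = (2*(j:ℤ)) from by push_cast; ring]
    rw [show (2*(j:ℤ)+1-2*N : ℤ) = ((1:ℤ) - 2*N) + 2*(j:ℤ) from by ring, zpow_add₀ Lq_ne]
    ring
  have hL : ∏ j ∈ range (2*N), (1 + (-Lq^((1:ℤ) - 2*N)) * Lq^(2*j))
      = (-1:K)^N * Lq^(-((N:ℤ)^2)) * RRL N ^ 2 := by
    rw [Finset.prod_congr rfl (fun j _ => hfac j)]
    rw [two_mul, Finset.prod_range_add]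
    have h2 : ∏ j ∈ range N, (1 - Lq^((2*((N+j:ℕ):ℤ)+1-2*N : ℤ))) = RRL N := by
      rw [RRL_eq]
      apply Finset.prod_congr rfl
      intro j _
      rw [show (2*((N+j:ℕ):ℤ)+1-2*N : ℤ) = ((2*j+1 : ℕ) : ℤ) from by push_cast; ring,
        zpow_natCast]
    have h1 : ∏ j ∈ range N, (1 - Lq^((2*(j:ℤ)+1-2*N : ℤ)))
        = (-1:K)^N * Lq^(-((N:ℤ)^2)) * RRL N := by
      have hsplit : ∀ j ∈ range N, (1 - Lq^((2*(j:ℤ)+1-2*N : ℤ)))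
          = (-Lq^((2*(j:ℤ)+1-2*N : ℤ))) * (1 - Lq^(2*(N-1-j)+1)) := by
        intro j hj
        have hjN : j < N := Finset.mem_range.mp hj
        have hone : Lq^((2*(j:ℤ)+1-2*N : ℤ)) * Lq^(2*(N-1-j)+1) = 1 := by
          rw [← zpow_natCast Lq (2*(N-1-j)+1), ← zpow_add₀ Lq_ne,
            show (2*(j:ℤ)+1-2*N) + ((2*(N-1-j)+1 : ℕ) : ℤ) = 0 from by push_cast [hjN]; omega,
            zpow_zero]
        linear_combination -hone
      rw [Finset.prod_congr rfl hsplit, Finset.prod_mul_distrib]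
      have hmon : ∏ j ∈ range N, (-Lq^((2*(j:ℤ)+1-2*N : ℤ)))
          = (-1:K)^N * Lq^(-((N:ℤ)^2)) := by
        have : ∀ j ∈ range N, (-Lq^((2*(j:ℤ)+1-2*N : ℤ)))
            = (-1:K) * Lq^((2*(j:ℤ)+1-2*N : ℤ)) := fun j _ => by ring
        rw [Finset.prod_congr rfl this, Finset.prod_mul_distrib, Finset.prod_const]
        congr 1
        · simp
        · have hzp : ∀ (g : ℕ → ℤ) (n : ℕ),
              ∏ j ∈ range n, Lq^(g j) = Lq^(∑ j ∈ range n, g j) := by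
            intro g n
            induction n with
            | zero => simp
            | succ n ih => rw [Finset.prod_range_succ, Finset.sum_range_succ, ih,
                zpow_add₀ Lq_ne]
          rw [hzp]
          congr 1
          have h8 : ∑ j ∈ range N, (2*(j:ℤ)+1-2*(N:ℤ))
              = (∑ j ∈ range N, (2*(j:ℤ)+1)) - (N:ℤ)*(2*N) := by
            rw [Finset.sum_sub_distrib, Finset.sum_const, Finset.card_range, nsmul_eq_mul]
          rw [h8, sum_odds]
          ring
      have hrefl : ∏ j ∈ range N, (1 - Lq^(2*(N-1-j)+1)) = RRL N := by
        rw [RRL_eq]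
        exact Finset.prod_range_reflect (fun j => 1 - Lq^(2*j+1)) N
      rw [hmon, hrefl]
    rw [h1, h2]
    ring
  -- RHS analysis
  have hR : ∑ m ∈ range (2*N+1), (-Lq^((1:ℤ) - 2*N))^m * Lq^(m*(m-1)) * Qb m (2*N-m)
      = Lq^(-((N:ℤ)^2)) * ∑ m ∈ range (2*N+1), (-1:K)^m * Lq^(sqe N m) * Qb m (2*N-m) := by
    rw [Finset.mul_sum]
    apply Finset.sum_congr rfl
    intro m _
    rw [zpow_neg_aux]
    have hexp : Lq^(((1:ℤ)-2*N) * m) * Lq^(m*(m-1))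
        = Lq^(-((N:ℤ)^2)) * Lq^(sqe N m) := by
      rw [← zpow_natCast Lq (m*(m-1)), ← zpow_natCast Lq (sqe N m), ← zpow_add₀ Lq_ne,
        ← zpow_add₀ Lq_ne]
      congr 1
      rw [sqe_cast]
      cases m with
      | zero => simp
      | succ k =>
        rw [show (k+1) * ((k+1) - 1) = (k+1) * k from rfl]
        push_cast
        ring
    calc (-1:K)^m * Lq^(((1:ℤ)-2*N) * m) * Lq^(m*(m-1)) * Qb m (2*N-m)
        = (-1:K)^m * (Lq^(((1:ℤ)-2*N) * m) * Lq^(m*(m-1))) * Qb m (2*N-m) := by ring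
      _ = (-1:K)^m * (Lq^(-((N:ℤ)^2)) * Lq^(sqe N m)) * Qb m (2*N-m) := by rw [hexp]
      _ = Lq^(-((N:ℤ)^2)) * ((-1:K)^m * Lq^(sqe N m) * Qb m (2*N-m)) := by ring
  rw [hL, hR] at h
  have hcan : (-1:K)^N * RRL N ^ 2
      = ∑ m ∈ range (2*N+1), (-1:K)^m * Lq^(sqe N m) * Qb m (2*N-m) := by
    apply mul_left_cancel₀ (zpow_ne_zero (-((N:ℤ)^2)) Lq_ne)
    rw [← h]
    ring
  have h2 : ((-1:K)^N) * ((-1:K)^N) = 1 := by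
    rw [← pow_add, show N+N = 2*N from by ring, pow_mul]
    norm_num
  calc RRL N ^ 2 = ((-1:K)^N * (-1:K)^N) * RRL N ^ 2 := by rw [h2, one_mul]
    _ = (-1:K)^N * ((-1:K)^N * RRL N ^ 2) := by ring
    _ = (-1:K)^N * ∑ m ∈ range (2*N+1), (-1:K)^m * Lq^(sqe N m) * Qb m (2*N-m) := by rw [hcan]
    _ = ∑ m ∈ range (2*N+1), (-1:K)^(m+N) * Lq^(sqe N m) * Qb m (2*N-m) := by
        rw [Finset.mul_sum]
        apply Finset.sum_congr rfl
        intro m _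
        rw [pow_add]
        ring

def w (N m : ℕ) : PS := PP (2*N) * (PP m * PP (2*N-m))⁻¹

lemma w_mul (N m : ℕ) : w N m * (PP m * PP (2*N-m)) = PP (2*N) := by
  rw [w, mul_assoc, PowerSeries.inv_mul_cancel _ (by
    rw [map_mul, constCoeff_PP, constCoeff_PP, one_mul]; norm_num), mul_one]

lemma coe_w (N m : ℕ) (hm : m ≤ 2*N) : ((w N m : PS) : K) = Qb m (2*N-m) := by
  have h := congrArg (fun f : PS => (f : K)) (w_mul N m)
  simp only [PowerSeries.coe_mul] at h
  rw [Qb, show m + (2*N-m) = 2*N from by omega]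
  rw [eq_div_iff (mul_ne_zero (ppL_ne m) (ppL_ne (2*N-m)))]
  exact h

lemma jtp (N : ℕ) : RR N ^ 2
    = ∑ m ∈ range (2*N+1), ((-1:PS))^(m+N) * X^(sqe N m) * w N m := by
  apply _root_.coe_injective
  show ((RR N ^ 2 : PS) : K) = ((∑ m ∈ range (2*N+1), ((-1:PS))^(m+N) * X^(sqe N m) * w N m : PS) : K)
  have hL : ((RR N ^ 2 : PS) : K) = RRL N ^ 2 := by rw [PowerSeries.coe_pow]; rfl
  have hRc : (((∑ m ∈ range (2*N+1), ((-1:PS))^(m+N) * X^(sqe N m) * w N m : PS)) : K)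
      = ∑ m ∈ range (2*N+1), (-1:K)^(m+N) * Lq^(sqe N m) * Qb m (2*N-m) := by
    rw [show (((∑ m ∈ range (2*N+1), ((-1:PS))^(m+N) * X^(sqe N m) * w N m : PS)) : K)
        = (HahnSeries.ofPowerSeries ℤ ℚ)
            (∑ m ∈ range (2*N+1), ((-1:PS))^(m+N) * X^(sqe N m) * w N m) from rfl]
    rw [map_sum]
    apply Finset.sum_congr rfl
    intro m hm
    have hm2 : m ≤ 2*N := by have := Finset.mem_range.mp hm; omega
    rw [map_mul, map_mul, map_pow, map_neg, map_one]
    rw [show (HahnSeries.ofPowerSeries ℤ ℚ) ((X:PS)^(sqe N m)) = Lq ^ (sqe N m) from by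
      rw [← coe_X_pow (sqe N m)]]
    rw [show (HahnSeries.ofPowerSeries ℤ ℚ) (w N m) = Qb m (2*N-m) from by
      rw [← coe_w N m hm2]]
  rw [hL, hRc]
  exact jtpL N

def tz (j : ℕ) : ℤ :=
  if j = 0 then 1 else if Nat.sqrt j * Nat.sqrt j = j then 2 * (-1)^(Nat.sqrt j) else 0

def theta : PS := PowerSeries.mk fun j => (tz j : ℚ)

lemma neg_one_pow_congr' (a b : ℕ) (h : a % 2 = b % 2) : ((-1:ℚ))^a = (-1)^b := by
  rcases Nat.even_or_odd a with ha | ha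
  · have hb : Even b := by rw [Nat.even_iff] at *; omega
    rw [Even.neg_one_pow ha, Even.neg_one_pow hb]
  · have hb : Odd b := by rw [Nat.odd_iff] at *; omega
    rw [Odd.neg_one_pow ha, Odd.neg_one_pow hb]

lemma coeff_thetad (d i : ℕ) (hi : i ≤ d) :
    coeff i (∑ m ∈ range (2*(d+1)+1), ((-1:PS))^(m+(d+1)) * X^(sqe (d+1) m))
      = (tz i : ℚ) := by
  set N := d + 1 with hN
  rw [map_sum]
  have hterm : ∀ m, coeff i (((-1:PS))^(m+N) * X^(sqe N m))
      = if i = sqe N m then ((-1:ℚ))^(m+N) else 0 := by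
    intro m
    rw [show ((-1:PS))^(m+N) = C ((-1:ℚ)^(m+N)) from by rw [map_pow, map_neg, map_one],
      coeff_C_mul, coeff_X_pow, mul_ite, mul_one, mul_zero]
  rw [Finset.sum_congr rfl (fun m _ => hterm m), ← Finset.sum_filter]
  by_cases h0 : i = 0
  · subst h0
    have hfil : (range (2*N+1)).filter (fun m => 0 = sqe N m) = {N} := by
      ext m
      simp only [Finset.mem_filter, Finset.mem_range, Finset.mem_singleton]
      constructor
      · rintro ⟨_, h⟩
        have hc := sqe_cast N m
        rw [← h] at hc
        have : (m:ℤ) - N = 0 := by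
          have := pow_eq_zero_iff (n := 2) (by norm_num) |>.mp hc.symm
          exact this
        omega
      · intro h
        subst h
        refine ⟨by omega, ?_⟩
        simp [sqe]
    rw [hfil, Finset.sum_singleton, show N + N = 2*N from by ring, pow_mul]
    norm_num [tz]
  · by_cases hsq : Nat.sqrt i * Nat.sqrt i = i
    · set k := Nat.sqrt i with hk
      have hk1 : 1 ≤ k := by
        by_contra h
        have : k = 0 := by omega
        rw [this] at hsq
        omega
      have hki : k ≤ i := by nlinarith
      have hkd : k ≤ d := le_trans hki hi
      have hicast : (i:ℤ) = (k:ℤ)^2 := by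
        rw [← hsq]; push_cast; ring
      have hfil : (range (2*N+1)).filter (fun m => i = sqe N m) = {N-k, N+k} := by
        ext m
        simp only [Finset.mem_filter, Finset.mem_range, Finset.mem_insert, Finset.mem_singleton]
        constructor
        · rintro ⟨hm, h⟩
          have hc := sqe_cast N m
          rw [← h, hicast] at hc
          have hfac : (((m:ℤ) - N) - k) * (((m:ℤ) - N) + k) = 0 := by linear_combination -hc
          rcases mul_eq_zero.mp hfac with h' | h' <;> omega
        · intro h
          have hgoal : ∀ m', m' < 2*N+1 → ((m':ℤ) - N)^2 = (k:ℤ)^2 →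
              m' < 2*N+1 ∧ i = sqe N m' := by
            intro m' h1 h2
            refine ⟨h1, ?_⟩
            have hc := sqe_cast N m'
            rw [h2, ← hicast] at hc
            omega
          rcases h with h | h <;> subst h
          · exact hgoal _ (by omega) (by
              rw [show (((N-k:ℕ)):ℤ) = (N:ℤ) - k from by push_cast [Nat.cast_sub (by omega : k ≤ N)]; ring]
              ring)
          · exact hgoal _ (by omega) (by push_cast; ring)
      rw [hfil, Finset.sum_pair (by omega : N - k ≠ N + k)]
      have e1 : ((-1:ℚ))^(N-k+N) = (-1)^k := neg_one_pow_congr' _ _ (by omega)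
      have e2 : ((-1:ℚ))^(N+k+N) = (-1)^k := neg_one_pow_congr' _ _ (by omega)
      rw [e1, e2, tz, if_neg h0, if_pos hsq, ← hk]
      push_cast
      ring
    · have hfil : (range (2*N+1)).filter (fun m => i = sqe N m) = ∅ := by
        ext m
        simp only [Finset.mem_filter, Finset.mem_range, Finset.notMem_empty, iff_false,
          not_and]
        intro _
        intro h
        have hc := sqe_cast N m
        rw [← h] at hc
        have h2 : ((m:ℤ)-N) * ((m:ℤ)-N) = (i:ℤ) := by
          have h3 := hc.symm
          rwa [sq] at h3
        have habs : ((m:ℤ) - N).natAbs * ((m:ℤ) - N).natAbs = i := by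
          have h4 : ((((m:ℤ)-N).natAbs * ((m:ℤ)-N).natAbs : ℕ) : ℤ) = (i:ℤ) :=
            (Int.natAbs_mul_self).trans h2
          exact_mod_cast h4
        have h5 : (((m:ℤ) - N).natAbs)^2 = i := by rw [sq]; exact habs
        have h6 := Nat.sqrt_eq' ((m:ℤ) - N).natAbs
        rw [h5] at h6
        exact hsq (by rw [h6]; exact habs)
      rw [hfil, Finset.sum_empty, tz, if_neg h0, if_neg hsq]
      norm_num

lemma two_sqrt_le (r : ℕ) : 2*r ≤ r*r + 1 := by
  cases r with
  | zero => omega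
  | succ s =>
    have : (s+1)*(s+1) = s*s + 2*s + 1 := by ring
    omega

lemma PPw_one (d N m : ℕ) (hN : N = d+1) (hm : m ≤ 2*N) (hsq : sqe N m ≤ d) :
    (X:PS)^(d+1) ∣ PP N * w N m - 1 := by
  set r := Nat.sqrt d with hr
  have hr2 : r * r ≤ d := by have h := Nat.sqrt_le' d; rwa [sq] at h
  have hk : ((m:ℤ) - N)^2 ≤ (d:ℤ) := by
    rw [← sqe_cast]
    exact_mod_cast hsq
  have hr3 : (d:ℤ) < ((r:ℤ)+1)^2 := by
    have h := Nat.lt_succ_sqrt' d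
    have h' : d < (r+1)^2 := by
      rw [hr]
      simpa [Nat.succ_eq_add_one] using h
    exact_mod_cast h' 
  have hbound : (N:ℤ) - r ≤ m ∧ (m:ℤ) ≤ N + r := by
    constructor <;> by_contra h <;> push_neg at h
    · have h9 : (r:ℤ)+1 ≤ (N:ℤ) - m := by omega
      have h10 : ((r:ℤ)+1)^2 ≤ ((N:ℤ)-m)^2 := by nlinarith
      nlinarith
    · have h9 : (r:ℤ)+1 ≤ (m:ℤ) - N := by omega
      have h10 : ((r:ℤ)+1)^2 ≤ ((m:ℤ)-N)^2 := by nlinarith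
      nlinarith
  set L := N - r with hL
  have hLm : L ≤ m := by omega
  have hL2 : d < 2*L+2 := by
    have := two_sqrt_le r
    omega
  have hLm2 : L ≤ 2*N - m := by omega
  have hLN : L ≤ N := by omega
  have hL2N : L ≤ 2*N := by omega
  have c1 : (X:PS)^(d+1) ∣ PP m - PP L := PP_congr d L m hLm hL2
  have c2 : (X:PS)^(d+1) ∣ PP (2*N-m) - PP L := PP_congr d L (2*N-m) hLm2 hL2
  have c3 : (X:PS)^(d+1) ∣ PP N - PP L := PP_congr d L N hLN hL2
  have c4 : (X:PS)^(d+1) ∣ PP (2*N) - PP L := PP_congr d L (2*N) hL2N hL2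
  have key : (X:PS)^(d+1) ∣ PP N * PP (2*N) - PP m * PP (2*N-m) := by
    have e : PP N * PP (2*N) - PP m * PP (2*N-m)
        = (PP N - PP L) * PP (2*N) + PP L * (PP (2*N) - PP L)
          - ((PP m - PP L) * PP (2*N-m) + PP L * (PP (2*N-m) - PP L)) := by ring
    rw [e]
    exact dvd_sub (dvd_add (c3.mul_right _) (c4.mul_left _))
      (dvd_add (c1.mul_right _) (c2.mul_left _))
  have e2 : (PP N * w N m - 1) * (PP m * PP (2*N-m))
      = PP N * PP (2*N) - PP m * PP (2*N-m) := by
    rw [sub_mul, one_mul, mul_assoc, w_mul]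
  apply dvd_unit_cancel (d+1) _ (PP m * PP (2*N-m))
  · rw [map_mul, constCoeff_PP, constCoeff_PP, one_mul]
    norm_num
  · rw [e2]
    exact key

lemma gauss : qpoch 1 1 ^ 2 = qpoch 2 2 * theta := by
  ext d
  have hdvd : (X:PS)^(d+1) ∣ qpoch 1 1 ^ 2 - qpoch 2 2 * theta := by
    set N := d + 1 with hN
    -- truncation of qpoch 1 1
    have h1 : (X:PS)^(d+1) ∣ qpoch 1 1 - Pfull (2*N) := by
      rw [dvd_iff_coeff_eq]
      intro i hi
      have hq : coeff i (qpoch 1 1) = coeff i (∏ n ∈ range (i+1), (1 - (X:PS)^(1+1*n))) := by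
        rw [qpoch, coeff_mk]
      have hp : Pfull (2*N) = ∏ n ∈ range (2*N), (1 - (X:PS)^(1+1*n)) :=
        Finset.prod_congr rfl (fun n _ => by rw [show 1+1*n = n+1 from by omega])
      rw [hq, hp, coeff_prod_stable (fun n => 1+1*n) i (i+1) (fun n hn => by show i < 1+1*n; omega) (2*N) (by omega)]
    have h2 : (X:PS)^(d+1) ∣ qpoch 2 2 - PP N := by
      rw [dvd_iff_coeff_eq]
      intro i hi
      have hq : coeff i (qpoch 2 2) = coeff i (∏ n ∈ range (i+1), (1 - (X:PS)^(2+2*n))) := by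
        rw [qpoch, coeff_mk]
      have hp : PP N = ∏ n ∈ range N, (1 - (X:PS)^(2+2*n)) :=
        Finset.prod_congr rfl (fun n _ => by rw [show 2+2*n = 2*n+2 from by omega])
      rw [hq, hp, coeff_prod_stable (fun n => 2+2*n) i (i+1) (fun n hn => by show i < 2+2*n; omega) N (by omega)]
    have h3 : (X:PS)^(d+1) ∣ theta - ∑ m ∈ range (2*N+1), ((-1:PS))^(m+N) * X^(sqe N m) := by
      rw [dvd_iff_coeff_eq]
      intro i hi
      rw [theta, coeff_mk, coeff_thetad d i (by omega)]
    have hinner : (X:PS)^(d+1) ∣ PP N * RR N ^ 2 - theta := by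
      have j : PP N * RR N ^ 2
          = ∑ m ∈ range (2*N+1), ((-1:PS))^(m+N) * X^(sqe N m) * (PP N * w N m) := by
        rw [jtp, Finset.mul_sum]
        exact Finset.sum_congr rfl (fun m _ => by ring)
      have split : PP N * RR N ^ 2 - theta
          = (∑ m ∈ range (2*N+1), (((-1:PS))^(m+N) * X^(sqe N m) * (PP N * w N m)
              - ((-1:PS))^(m+N) * X^(sqe N m)))
            + ((∑ m ∈ range (2*N+1), ((-1:PS))^(m+N) * X^(sqe N m)) - theta) := by
        rw [j, Finset.sum_sub_distrib]
        ring
      rw [split]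
      apply dvd_add
      · apply Finset.dvd_sum
        intro m hm
        have hm2 : m ≤ 2*N := by have := Finset.mem_range.mp hm; omega
        have e : ((-1:PS))^(m+N) * X^(sqe N m) * (PP N * w N m) - ((-1:PS))^(m+N) * X^(sqe N m)
            = ((-1:PS))^(m+N) * X^(sqe N m) * (PP N * w N m - 1) := by ring
        rw [e]
        rcases le_or_gt (sqe N m) d with hs | hs
        · exact (PPw_one d N m hN hm2 hs).mul_left _
        · apply Dvd.dvd.mul_right
          apply Dvd.dvd.mul_left
          exact pow_dvd_pow _ (by omega)
      · rw [← dvd_neg, neg_sub]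
        exact h3
    have key : qpoch 1 1 ^ 2 - qpoch 2 2 * theta
        = (qpoch 1 1 - Pfull (2*N)) * (qpoch 1 1 + Pfull (2*N))
          - (qpoch 2 2 - PP N) * theta + PP N * (PP N * RR N ^ 2 - theta) := by
      rw [Pfull_split]
      ring
    rw [key]
    exact dvd_add (dvd_sub (h1.mul_right _) (h2.mul_right _)) (hinner.mul_left _)
  have := (X_pow_dvd_iff.mp hdvd) d (by omega)
  rw [map_sub, sub_eq_zero] at this
  exact this

lemma constCoeff_qpoch (a b : ℕ) (ha : a ≠ 0) : constantCoeff (qpoch a b) = 1 := by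
  rw [← coeff_zero_eq_constantCoeff_apply, qpoch, coeff_mk, coeff_zero_eq_constantCoeff_apply]
  exact constCoeff_oneSubProd _ _ (fun i _ => by positivity)

lemma qpoch_ne (a b : ℕ) (ha : a ≠ 0) : qpoch a b ≠ 0 := fun h => by
  have := constCoeff_qpoch a b ha; rw [h] at this; simp at this

lemma E_ne (a b : ℕ) (ha : a ≠ 0) : E a b ≠ 0 := by
  intro h
  apply qpoch_ne a b ha
  apply HahnSeries.ofPowerSeries_injective (Γ := ℤ)
  rw [show ((HahnSeries.ofPowerSeries ℤ ℚ) (qpoch a b) : LaurentSeries ℚ) = E a b from rfl, h]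
  exact (PowerSeries.coe_zero).symm

lemma tz_zero : tz 0 = 1 := by simp [tz]

lemma tz_even (j : ℕ) (hj : j ≠ 0) : 2 ∣ tz j := by
  rw [tz, if_neg hj]
  split_ifs
  · exact Dvd.intro _ rfl
  · exact dvd_zero 2

theorem overpartition_five_n_two_mod_four (pbar : ℕ → ℤ)
    (hgen : ((PowerSeries.mk (fun n => (pbar n : ℚ)) : PowerSeries ℚ) : LaurentSeries ℚ)
      = E 2 2 / E 1 1 ^ 2) :
    ∀ n : ℕ, (4 : ℤ) ∣ pbar (5 * n + 2) := by
  -- Step 1: power series identity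
  have hq : (PowerSeries.mk (fun n => (pbar n : ℚ)) : PowerSeries ℚ) * qpoch 1 1 ^ 2
      = qpoch 2 2 := by
    apply HahnSeries.ofPowerSeries_injective (Γ := ℤ)
    have h2 : E 1 1 ^ 2 ≠ 0 := pow_ne_zero _ (E_ne 1 1 one_ne_zero)
    have hco : ((PowerSeries.mk (fun n => (pbar n : ℚ)) * qpoch 1 1 ^ 2 : PowerSeries ℚ)
        : LaurentSeries ℚ)
        = ((PowerSeries.mk (fun n => (pbar n : ℚ)) : PowerSeries ℚ) : LaurentSeries ℚ)
            * E 1 1 ^ 2 := by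
      rw [PowerSeries.coe_mul, PowerSeries.coe_pow]; rfl
    show ((PowerSeries.mk (fun n => (pbar n : ℚ)) * qpoch 1 1 ^ 2 : PowerSeries ℚ)
        : LaurentSeries ℚ) = _
    rw [hco, hgen, div_mul_cancel₀ _ h2]
    rfl
  -- Step 2: mk pbar * theta = 1
  have hθ : (PowerSeries.mk (fun n => (pbar n : ℚ)) : PowerSeries ℚ) * theta = 1 := by
    have h22 : qpoch 2 2 ≠ 0 := qpoch_ne 2 2 (by norm_num)
    apply mul_right_cancel₀ h22
    rw [one_mul]
    rw [gauss] at hq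
    linear_combination hq
  -- Step 3: integer convolution identity
  have hcoef : ∀ n : ℕ, (∑ p ∈ Finset.HasAntidiagonal.antidiagonal n, pbar p.1 * tz p.2)
      = if n = 0 then 1 else 0 := by
    intro n
    have h := congrArg (coeff n) hθ
    rw [PowerSeries.coeff_mul, PowerSeries.coeff_one] at h
    have hterm : ∀ p ∈ Finset.HasAntidiagonal.antidiagonal n,
        coeff p.1 (PowerSeries.mk (fun n => (pbar n : ℚ))) * coeff p.2 theta
          = ((pbar p.1 * tz p.2 : ℤ) : ℚ) := by
      intro p _
      rw [coeff_mk, theta, coeff_mk]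
      push_cast
      ring
    rw [Finset.sum_congr rfl hterm] at h
    push_cast at h
    have h2 : ((∑ p ∈ Finset.HasAntidiagonal.antidiagonal n, pbar p.1 * tz p.2 : ℤ) : ℚ)
        = ((if n = 0 then 1 else 0 : ℤ) : ℚ) := by
      push_cast
      rw [h]
    exact_mod_cast h2
  -- Step 4: strong induction
  have main : ∀ n : ℕ, (n ≠ 0 → 2 ∣ pbar n)
      ∧ (n ≠ 0 → Nat.sqrt n * Nat.sqrt n ≠ n → 4 ∣ pbar n) := by
    intro n
    induction n using Nat.strong_induction_on with
    | _ n ih =>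
      rcases eq_or_ne n 0 with rfl | hn
      · exact ⟨fun h => absurd rfl h, fun h => absurd rfl h⟩
      have hmem : ((n, 0) : ℕ × ℕ) ∈ Finset.HasAntidiagonal.antidiagonal n :=
        Finset.HasAntidiagonal.mem_antidiagonal.mpr (add_zero n)
      have hsplit := Finset.sum_erase_add (Finset.HasAntidiagonal.antidiagonal n)
        (fun p => pbar p.1 * tz p.2) hmem
      have hs := hcoef n
      rw [if_neg hn] at hs
      rw [hs] at hsplit
      have hsplit' : (∑ p ∈ (Finset.HasAntidiagonal.antidiagonal n).erase (n, 0), pbar p.1 * tz p.2)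
          + pbar n * tz 0 = 0 := hsplit
      have hpn : pbar n = -∑ p ∈ (Finset.HasAntidiagonal.antidiagonal n).erase (n, 0), pbar p.1 * tz p.2 := by
        rw [tz_zero, mul_one] at hsplit'
        omega
      have hp2ne : ∀ p ∈ (Finset.HasAntidiagonal.antidiagonal n).erase (n, 0), p.2 ≠ 0 := by
        intro p hp
        obtain ⟨hne, hmem'⟩ := Finset.mem_erase.mp hp
        have hsum := Finset.HasAntidiagonal.mem_antidiagonal.mp hmem'
        intro h0
        apply hne
        rw [Prod.ext_iff]
        omega
      constructor
      · intro _
        rw [hpn]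
        apply dvd_neg.mpr
        apply Finset.dvd_sum
        intro p hp
        exact (tz_even p.2 (hp2ne p hp)).mul_left _
      · intro _ hnsq
        rw [hpn]
        apply dvd_neg.mpr
        apply Finset.dvd_sum
        intro p hp
        obtain ⟨hne, hmem'⟩ := Finset.mem_erase.mp hp
        have hsum := Finset.HasAntidiagonal.mem_antidiagonal.mp hmem'
        have hj : p.2 ≠ 0 := hp2ne p hp
        by_cases hz : tz p.2 = 0
        · rw [hz, mul_zero]
          exact dvd_zero _
        · have hsq : Nat.sqrt p.2 * Nat.sqrt p.2 = p.2 := by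
            by_contra hs'
            rw [tz, if_neg hj, if_neg hs'] at hz
            exact hz rfl
          have hi : p.1 ≠ 0 := by
            intro h0
            apply hnsq
            have : p.2 = n := by omega
            rw [← this]
            exact hsq
          have h2a : 2 ∣ pbar p.1 := (ih p.1 (by omega)).1 hi
          have h2b : 2 ∣ tz p.2 := tz_even p.2 hj
          have : (4:ℤ) = 2 * 2 := by norm_num
          rw [this]
          exact mul_dvd_mul h2a h2b
  -- Step 5: 5n+2 is not a square
  intro n
  apply (main (5*n+2)).2 (by omega)
  intro hsq
  set k := Nat.sqrt (5*n+2) with hk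
  have hmod := Nat.mul_mod k k 5
  rw [hsq] at hmod
  have h5 : k % 5 < 5 := Nat.mod_lt _ (by norm_num)
  interval_cases h : k % 5 <;> omega

end
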